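/- Let A be an AB3 abelian category with a set P_0 of projective generators that is self-small (for each P ∈ P_0 and each family (P_λ) in P_0, the canonical map ∐_λ Hom(P, P_λ) → Hom(P, ∐_λ P_λ) is an isomorphism). Then every object of P_0 is a compact (small) object of A, i.e. Hom(P, −) preserves all set-indexed coproducts. -/

import Mathlib

open CategoryTheory CategoryTheory.Limits DirectSum

universe v u

namespace Paper

variable {C : Type u} [Category.{v} C] [Abelian C]

/-- The canonical map `∐_j Hom(P, A j) → Hom(P, ∐_j A j)` (the source being the direct
sum of abelian groups), sending a finitely supported family `(f_j)` to `∑ f_j ≫ ι_j`. -/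
noncomputable def coprodHomMap (P : C) {J : Type v} [DecidableEq J] (A : J → C)
    [HasCoproduct A] : (DirectSum J (fun j => (P ⟶ A j))) →+ (P ⟶ ∐ A) :=
  DirectSum.toAddMonoid fun j =>
    AddMonoidHom.mk' (fun f => f ≫ Sigma.ι A j) (fun f g => by
      simp [Preadditive.add_comp])

lemma coprodHomMap_of (P : C) {J : Type v} [DecidableEq J] (A : J → C)
    [HasCoproduct A] (j : J) (h : P ⟶ A j) :
    coprodHomMap P A (DirectSum.of _ j h) = h ≫ Sigma.ι A j := by
  simp [coprodHomMap]

/-- in an AB3 abelian category, each member of a self-small set of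
projective generators is a compact (small) object: `Hom(P, −)` preserves all
set-indexed coproducts. -/
theorem statement11 [HasCoproducts.{v} C] (ι : Type v) (P : ι → C)
    (hproj : ∀ i, Projective (P i))
    (hgen : ∀ X : C, ∃ (J : Type v) (g : J → ι) (p : (∐ fun j => P (g j)) ⟶ X), Epi p)
    (hss : ∀ (i : ι) (J : Type v) [DecidableEq J] (g : J → ι),
      Function.Bijective (coprodHomMap (P i) (fun j => P (g j)))) :
    ∀ (i : ι) (J : Type v) [DecidableEq J] (A : J → C),
      Function.Bijective (coprodHomMap (P i) A) := by
  intro i J _ A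
  constructor
  · -- injectivity
    rw [injective_iff_map_eq_zero]
    intro d hd
    refine DFunLike.ext _ _ fun j => ?_
    -- retraction of the j-th inclusion
    let r : (∐ A) ⟶ A j := Sigma.desc (fun j' =>
      if h : j' = j then eqToHom (by rw [h]) else 0)
    have key : ∀ d : DirectSum J (fun j => (P i ⟶ A j)),
        coprodHomMap (P i) A d ≫ r = d j := by
      intro d
      induction d using DirectSum.induction_on with
      | zero => simp
      | of l h =>
        rw [coprodHomMap_of]
        by_cases hl : l = j
        · subst hl
          simp [r, DirectSum.of_eq_same]
        · simp [r, hl, DirectSum.of_eq_of_ne _ _ _ (Ne.symm hl)]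
      | add x y hx hy =>
        simp [Preadditive.add_comp, hx, hy]
    have := key d
    rw [hd] at this
    rw [Limits.zero_comp] at this
    exact this.symm
  · -- surjectivity
    intro f
    classical
    -- choose presentations of each `A j` by generators
    choose K g p hp using fun j => hgen (A j)
    -- the combined coproduct over the sigma type
    set L : Type v := Σ j : J, K j with hL
    set G : L → ι := fun l => g l.1 l.2 with hG
    set Q : L → C := fun l => P (G l) with hQ
    -- the canonical epimorphism `∐ Q ⟶ ∐ A`
    let e : (∐ Q) ⟶ (∐ A) := Sigma.desc (fun l =>
      Sigma.ι (fun k => P (g l.1 k)) l.2 ≫ p l.1 ≫ Sigma.ι A l.1)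
    have hι : ∀ l : L, Sigma.ι Q l ≫ e =
        Sigma.ι (fun k => P (g l.1 k)) l.2 ≫ p l.1 ≫ Sigma.ι A l.1 := by
      intro l; simp [e]
    have he : Epi e := by
      refine ⟨fun {Z} u v huv => ?_⟩
      ext j
      haveI := hp j
      rw [← cancel_epi (p j)]
      ext k
      have h1 := Sigma.ι Q ⟨j, k⟩ ≫= huv
      rw [← Category.assoc, ← Category.assoc, hι] at h1
      simpa using h1
    -- lift `f` along `e` using projectivity
    haveI := hproj i
    obtain ⟨f', hf'⟩ : ∃ f' : P i ⟶ ∐ Q, f' ≫ e = f :=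
      ⟨Projective.factorThru f e, Projective.factorThru_comp f e⟩
    -- use self-smallness for the family `Q`
    obtain ⟨d', hd'⟩ := (hss i L G).2 f'
    -- push forward the direct sum element
    let Φ : (DirectSum L (fun l => (P i ⟶ Q l))) →+
        (DirectSum J (fun j => (P i ⟶ A j))) :=
      DirectSum.toAddMonoid fun l =>
        (DirectSum.of (fun j => (P i ⟶ A j)) l.1).comp
          (AddMonoidHom.mk' (fun h => h ≫ Sigma.ι (fun k => P (g l.1 k)) l.2 ≫ p l.1)
            (fun h₁ h₂ => by simp [Preadditive.add_comp]))
    refine ⟨Φ d', ?_⟩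
    have key : (coprodHomMap (P i) A).comp Φ =
        (AddMonoidHom.mk' (fun h : P i ⟶ ∐ Q => h ≫ e)
          (fun h₁ h₂ => by simp [Preadditive.add_comp])).comp
          (coprodHomMap (P i) Q) := by
      refine DirectSum.addHom_ext fun l h => ?_
      simp only [AddMonoidHom.comp_apply, Φ, DirectSum.toAddMonoid_of]
      rw [coprodHomMap_of, coprodHomMap_of]
      simp only [AddMonoidHom.comp_apply, AddMonoidHom.mk'_apply, Category.assoc]
      rw [hι l]
    have := DFunLike.congr_fun key d'
    simp only [AddMonoidHom.comp_apply, AddMonoidHom.mk'_apply] at this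
    rw [this, hd', hf']

end Paper
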